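/- arXiv:1705.03307 — 4 statements merged into one kernel-verified Lean document; each statement's English description precedes it below -/
import Mathlib

section
/- If I is a finite pretype (strictly isomorphic to Fin n for some strict natural number n) and X : I → 𝒰 is a family of fibrant types, then the dependent product Π(i:I) X(i) is essentially fibrant (strictly isomorphic to a fibrant type). -/
/-- The data of a two-level type theory (over Lean's strict layer, where
strict equality is `Eq` and strict isomorphism is `Equiv`): a fibrancy
predicate on pretypes, fibrant identity types with their elimination rule
into fibrant families, and closure of fibrant types under `Π` and `Σ`. -/
structure TLTT : Type 1 where
  Fib : Type → Prop
  Id : (A : Type) → A → A → Type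
  idRefl : {A : Type} → (a : A) → Id A a a
  fibId : ∀ {A : Type}, Fib A → ∀ a b : A, Fib (Id A a b)
  idElim : {A : Type} → (a : A) → (P : (b : A) → Id A a b → Type) →
    (∀ b p, Fib (P b p)) → P a (idRefl a) → ∀ b p, P b p
  idComp : ∀ {A : Type} (a : A) (P : (b : A) → Id A a b → Type)
      (hP : ∀ b p, Fib (P b p)) (d : P a (idRefl a)),
      idElim a P hP d a (idRefl a) = d
  fibUnit : Fib PUnit
  fibPi : ∀ {A : Type} {B : A → Type}, Fib A → (∀ a, Fib (B a)) → Fib (∀ a, B a)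
  fibSigma : ∀ {A : Type} {B : A → Type}, Fib A → (∀ a, Fib (B a)) → Fib (Σ a, B a)

namespace TwoLevel

/-- A pretype is essentially fibrant if it is strictly isomorphic to a fibrant type. -/
def EssFib (T : TLTT) (A : Type) : Prop := ∃ B : Type, T.Fib B ∧ Nonempty (A ≃ B)

/-- A pretype is finite if it is strictly isomorphic to some `Fin n`. -/
def IsFinite (A : Type) : Prop := ∃ n : ℕ, Nonempty (A ≃ Fin n)

/-- A map is a fibration if all of its strict fibres are essentially fibrant. -/
def IsFibration (T : TLTT) {E B : Type} (p : E → B) : Prop :=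
  ∀ b : B, EssFib T { e : E // p e = b }

/-- Homotopy equivalence of pretypes with respect to the fibrant identity type. -/
def IsHEquiv (T : TLTT) {A B : Type} (f : A → B) : Prop :=
  ∃ g : B → A, (∀ a, Nonempty (T.Id A (g (f a)) a)) ∧ (∀ b, Nonempty (T.Id B (f (g b)) b))

/-- A pretype is cofibrant if exponentiating out of it preserves fibrations. -/
def Cofibrant (T : TLTT) (A : Type) : Prop :=
  ∀ {X Y : Type} (p : X → Y), IsFibration T p → IsFibration T (fun g : A → X => p ∘ g)

/-- A cofibration is a complemented monomorphism with cofibrant complement. -/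
def IsCofibration (T : TLTT) {A B : Type} (f : A → B) : Prop :=
  ∃ Ac : Type, Cofibrant T Ac ∧ ∃ g : Ac → B, Function.Bijective (Sum.elim f g)

end TwoLevel
/-- Strict categories: categorical laws hold up to strict equality. -/
structure SCat : Type 1 where
  Obj : Type
  Hom : Obj → Obj → Type
  id : ∀ x, Hom x x
  comp : ∀ {x y z}, Hom y z → Hom x y → Hom x z
  id_comp : ∀ {x y} (f : Hom x y), comp (id y) f = f
  comp_id : ∀ {x y} (f : Hom x y), comp f (id x) = f
  assoc : ∀ {w x y z} (h : Hom y z) (g : Hom x y) (f : Hom w x),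
    comp (comp h g) f = comp h (comp g f)

/-- Strict (pretype-valued) diagrams on a strict category. -/
structure SFunctor (C : SCat) : Type 1 where
  obj : C.Obj → Type
  map : ∀ {x y}, C.Hom x y → obj x → obj y
  map_id : ∀ {x} (a : obj x), map (C.id x) a = a
  map_comp : ∀ {x y z} (g : C.Hom y z) (f : C.Hom x y) (a : obj x),
    map g (map f a) = map (C.comp g f) a

/-- Strict natural transformations of diagrams. -/
structure SNat {C : SCat} (X Y : SFunctor C) : Type where
  app : ∀ i, X.obj i → Y.obj i
  nat : ∀ {i j} (f : C.Hom i j) (a : X.obj i), Y.map f (app i a) = app j (X.map f a)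

theorem SNat.ext' {C : SCat} {X Y : SFunctor C} {f g : SNat X Y}
    (h : f.app = g.app) : f = g := by
  cases f; cases g; cases h; rfl

/-- Composition of natural transformations. -/
def natComp {C : SCat} {X Y Z : SFunctor C} (g : SNat Y Z) (f : SNat X Y) : SNat X Z :=
  ⟨fun i a => g.app i (f.app i a), by intro i j u a; rw [g.nat, f.nat]⟩

/-- The (strict) limit of a diagram, realised as the pretype of cones with tip `1`. -/
def SLimit (C : SCat) (X : SFunctor C) : Type :=
  { c : ∀ i, X.obj i // ∀ ⦃i j⦄ (f : C.Hom i j), X.map f (c i) = c j }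

/-- The constant diagram. -/
def constF (C : SCat) (A : Type) : SFunctor C :=
  ⟨fun _ => A, fun _ a => a, fun _ => rfl, fun _ _ _ => rfl⟩

/-- `f` is not an identity morphism. -/
def NotId (C : SCat) {x y : C.Obj} (f : C.Hom x y) : Prop :=
  ¬ ∃ _h : x = y, HEq f (C.id x)

/-- Objects of the reduced coslice `z ⫽ C`. -/
def RedCoslice (C : SCat) (z : C.Obj) : Type :=
  Σ y : C.Obj, { f : C.Hom z y // NotId C f }

/-- The reduced coslice category `z ⫽ C`. -/
def RedCosliceCat (C : SCat) (z : C.Obj) : SCat where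
  Obj := RedCoslice C z
  Hom w w' := { h : C.Hom w.1 w'.1 // C.comp h w.2.1 = w'.2.1 }
  id w := ⟨C.id w.1, C.id_comp _⟩
  comp h g := ⟨C.comp h.1 g.1, by rw [C.assoc, g.2, h.2]⟩
  id_comp f := Subtype.ext (C.id_comp _)
  comp_id f := Subtype.ext (C.comp_id _)
  assoc h g f := Subtype.ext (C.assoc _ _ _)

/-- Restriction of a diagram along the forgetful functor `z ⫽ C → C`. -/
def restrictRC {C : SCat} (X : SFunctor C) (z : C.Obj) : SFunctor (RedCosliceCat C z) where
  obj w := X.obj w.1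
  map h a := X.map h.1 a
  map_id a := X.map_id a
  map_comp g f a := X.map_comp g.1 f.1 a

/-- The matching object `M_z^X`: the limit of `X` over the reduced coslice. -/
def Matching {C : SCat} (X : SFunctor C) (z : C.Obj) : Type :=
  SLimit (RedCosliceCat C z) (restrictRC X z)

/-- The canonical map `X_z → M_z^X`. -/
def canMatch {C : SCat} (X : SFunctor C) (z : C.Obj) (x : X.obj z) : Matching X z :=
  ⟨fun w => X.map w.2.1 x, by
    intro w w' h
    exact (X.map_comp h.1 w.2.1 x).trans (by rw [h.2])⟩

/-- A diagram is Reedy fibrant if each canonical map `X_z → M_z^X` is a fibration. -/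
def ReedyFibrant (T : TLTT) {C : SCat} (X : SFunctor C) : Prop :=
  ∀ z, TwoLevel.IsFibration T (canMatch X z)

/-- The map induced on matching objects by a natural transformation. -/
def matchNat {C : SCat} {X Y : SFunctor C} (p : SNat X Y) (z : C.Obj) :
    Matching X z → Matching Y z :=
  fun c => ⟨fun w => p.app w.1 (c.1 w), by
    intro w w' h
    exact (p.nat h.1 (c.1 w)).trans (congrArg (p.app w'.1) (c.2 h))⟩

/-- The relative matching map `X_n → M_n^X ×_{M_n^Y} Y_n` of `p : X → Y`. -/
def relMatchMap {C : SCat} {X Y : SFunctor C} (p : SNat X Y) (n : C.Obj) :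
    X.obj n → { q : Matching X n × Y.obj n // matchNat p n q.1 = canMatch Y n q.2 } :=
  fun x => ⟨(canMatch X n x, p.app n x), by
    apply Subtype.ext
    funext w
    exact (p.nat w.2.1 x).symm⟩

/-- A natural transformation is a Reedy fibration if all of its relative matching
maps are fibrations. -/
def IsReedyFibration (T : TLTT) {C : SCat} {X Y : SFunctor C} (p : SNat X Y) : Prop :=
  ∀ n, TwoLevel.IsFibration T (relMatchMap p n)

/-- An inverse category: a strict category with a rank function such that every
morphism either strictly decreases the rank or is an identity. -/
def IsInverse (C : SCat) : Prop :=
  ∃ φ : C.Obj → ℕ, ∀ ⦃x y⦄ (f : C.Hom x y), φ x > φ y ∨ ∃ h : x = y, HEq f (C.id x)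

/-- The map induced on limits by a natural transformation. -/
def limMap {C : SCat} {X Y : SFunctor C} (p : SNat X Y) : SLimit C X → SLimit C Y :=
  fun c => ⟨fun i => p.app i (c.1 i), by
    intro i j f
    exact (p.nat f (c.1 i)).trans (congrArg (p.app j) (c.2 f))⟩

/-- An inverse category is admissible if Reedy fibrant diagrams over all of its
reduced coslices have essentially fibrant limits. -/
def Admissible (T : TLTT) (C : SCat) : Prop :=
  ∀ (z : C.Obj) (Y : SFunctor (RedCosliceCat C z)), ReedyFibrant T Y →
    TwoLevel.EssFib T (SLimit (RedCosliceCat C z) Y)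

/-- The pullback of diagrams `A ×_B X` along `f : A → B` and `p : X → B`,
computed pointwise. -/
def pbFunctor {C : SCat} {A B X : SFunctor C} (f : SNat A B) (p : SNat X B) :
    SFunctor C where
  obj i := { z : A.obj i × X.obj i // f.app i z.1 = p.app i z.2 }
  map g z := ⟨(A.map g z.1.1, X.map g z.1.2), by rw [← f.nat, ← p.nat, z.2]⟩
  map_id z := by
    apply Subtype.ext
    exact Prod.ext (A.map_id _) (X.map_id _)
  map_comp g h z := by
    apply Subtype.ext
    exact Prod.ext (A.map_comp _ _ _) (X.map_comp _ _ _)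

/-- Projection from the pullback of diagrams to the base. -/
def pbProj {C : SCat} {A B X : SFunctor C} (f : SNat A B) (p : SNat X B) :
    SNat (pbFunctor f p) A :=
  ⟨fun _ z => z.1.1, fun _ _ => rfl⟩

/-- A pushout square of diagrams, via its universal property. -/
def IsPushout {C : SCat} {P A B Q : SFunctor C} (f : SNat P A) (g : SNat P B)
    (ia : SNat A Q) (ib : SNat B Q) : Prop :=
  natComp ia f = natComp ib g ∧
  ∀ (W : SFunctor C) (u : SNat A W) (v : SNat B W),
    natComp u f = natComp v g → ∃! w : SNat Q W, natComp w ia = u ∧ natComp w ib = v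
/-- Hom-pretypes of the category `C* = 1 ⋆ C` obtained by freely adjoining an
initial object `none`. -/
def OHom (C : SCat) : Option C.Obj → Option C.Obj → Type
  | none, _ => PUnit
  | some _, none => Empty
  | some a, some b => C.Hom a b

def oid (C : SCat) : ∀ x : Option C.Obj, OHom C x x
  | none => PUnit.unit
  | some a => C.id a

def ocomp (C : SCat) : ∀ {x y z : Option C.Obj}, OHom C y z → OHom C x y → OHom C x z
  | none, _, _, _, _ => PUnit.unit
  | some _, none, _, _, f => f.elim
  | some _, some _, none, g, _ => g.elim
  | some _, some _, some _, g, f => C.comp g f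

/-- The category `C* = 1 ⋆ C`. -/
def CStar (C : SCat) : SCat where
  Obj := Option C.Obj
  Hom := OHom C
  id := oid C
  comp := ocomp C
  id_comp {x y} f := by
    cases x <;> cases y
    · rfl
    · rfl
    · exact f.elim
    · exact C.id_comp f
  comp_id {x y} f := by
    cases x <;> cases y
    · rfl
    · rfl
    · exact f.elim
    · exact C.comp_id f
  assoc {w x y z} h g f := by
    cases w <;> cases x <;> cases y <;> cases z <;>
      first
        | rfl
        | exact f.elim
        | exact g.elim
        | exact h.elim
        | exact C.assoc h g f

/-- Restriction of a diagram on `C*` to `C`. -/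
def restrictC {C : SCat} (X : SFunctor (CStar C)) : SFunctor C where
  obj i := X.obj (some i)
  map {i j} f a := X.map (x := some i) (y := some j) f a
  map_id a := X.map_id a
  map_comp g f a := X.map_comp (x := some _) (y := some _) (z := some _) g f a

/-- Restriction of a natural transformation of diagrams on `C*` to `C`. -/
def restrictNat {C : SCat} {F G : SFunctor (CStar C)} (η : SNat F G) :
    SNat (restrictC F) (restrictC G) :=
  ⟨fun i a => η.app (some i) a, fun f a => η.nat (i := some _) (j := some _) f a⟩

/-- The canonical map `X(*) → lim_C X`. -/
def canLim {C : SCat} (X : SFunctor (CStar C)) : X.obj none → SLimit C (restrictC X) :=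
  fun x => ⟨fun i => X.map (x := none) (y := some i) PUnit.unit x, by
    intro i j f
    exact X.map_comp (x := none) (y := some i) (z := some j) f PUnit.unit x⟩
/-- The product of a diagram `F` with the Yoneda (corepresentable) diagram `C(d, −)`. -/
def yonProd {C : SCat} (F : SFunctor C) (d : C.Obj) : SFunctor C where
  obj c := F.obj c × C.Hom d c
  map f z := (F.map f z.1, C.comp f z.2)
  map_id z := by
    obtain ⟨a, g⟩ := z
    show (F.map (C.id _) a, C.comp (C.id _) g) = (a, g)
    rw [F.map_id, C.id_comp]
  map_comp g f z := by
    obtain ⟨a, u⟩ := z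
    show (F.map g (F.map f a), C.comp g (C.comp f u)) = (F.map (C.comp g f) a, C.comp (C.comp g f) u)
    rw [F.map_comp, C.assoc]

/-- The exponential diagram `[F, X]`, defined via Yoneda:
`[F, X](d) = Nat(F × C(d,−), X)`. -/
def expF {C : SCat} (F X : SFunctor C) : SFunctor C where
  obj d := SNat (yonProd F d) X
  map {d d'} h η :=
    ⟨fun c z => η.app c (z.1, C.comp z.2 h), by
      intro c c' f z
      refine (η.nat f (z.1, C.comp z.2 h)).trans ?_
      show η.app c' (F.map f z.1, C.comp f (C.comp z.2 h)) = η.app c' (F.map f z.1, C.comp (C.comp f z.2) h)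
      rw [C.assoc]⟩
  map_id {d} η := by
    apply SNat.ext'
    funext c z
    show η.app c (z.1, C.comp z.2 (C.id d)) = η.app c z
    rw [C.comp_id]
    rfl
  map_comp g f η := by
    apply SNat.ext'
    funext c z
    show η.app c (z.1, C.comp (C.comp z.2 g) f) = η.app c (z.1, C.comp z.2 (C.comp g f))
    rw [C.assoc]

/-- Whiskering a natural transformation with the Yoneda factor. -/
def prodWhisker {C : SCat} {F G : SFunctor C} (τ : SNat F G) (d : C.Obj) :
    SNat (yonProd F d) (yonProd G d) :=
  ⟨fun c z => (τ.app c z.1, z.2), by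
    intro c c' f z
    show (G.map f (τ.app c z.1), C.comp f z.2) = (τ.app c' (F.map f z.1), C.comp f z.2)
    rw [τ.nat]⟩

/-- The natural transformation `(− ∘ τ) : [G, X] → [F, X]` induced on exponentials
by precomposition with `τ : F → G`. -/
def expMap {C : SCat} {F G : SFunctor C} (τ : SNat F G) (X : SFunctor C) :
    SNat (expF G X) (expF F X) :=
  ⟨fun d η => natComp η (prodWhisker τ d), fun _ _ => SNat.ext' rfl⟩
/-- Morphisms `[m] → [k]` of the semi-simplex category `Δ₊ᵒᵖ`:
strictly monotone maps `Fin (k+1) → Fin (m+1)`. -/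
def DeltaHom (m k : ℕ) : Type := { f : Fin (k+1) → Fin (m+1) // StrictMono f }

/-- The semi-simplex category `Δ₊ᵒᵖ`. -/
@[reducible] def DeltaOp : SCat where
  Obj := ℕ
  Hom := DeltaHom
  id _ := ⟨_root_.id, strictMono_id⟩
  comp g f := ⟨f.1 ∘ g.1, f.2.comp g.2⟩
  id_comp _ := Subtype.ext rfl
  comp_id _ := Subtype.ext rfl
  assoc _ _ _ := Subtype.ext rfl

/-- A semi-simplicial set/type is a diagram on `Δ₊ᵒᵖ`. -/
abbrev SSDiagram : Type 1 := SFunctor DeltaOp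

theorem strictMono_fin_le {a b : ℕ} (g : Fin a → Fin b) (hg : StrictMono g) : a ≤ b := by
  simpa using Fintype.card_le_of_injective g hg.injective

set_option linter.deprecated false in
theorem strictMono_fin_id {a : ℕ} (g : Fin a → Fin a) (hg : StrictMono g) :
    ∀ i, g i = i := by
  have hsur : Function.Surjective g := Finite.injective_iff_surjective.mp hg.injective
  have hid : g = fun i => i := by
    apply (hg.range_inj strictMono_id).mp
    rw [Set.range_id]
    exact Set.range_eq_univ.mpr hsur
  intro i; rw [hid]

/-- A subfunctor of the Yoneda (representable) semi-simplicial set `Δ^n`,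
given by a family of propositions closed under the functorial action. -/
structure SubP (n : ℕ) : Type where
  mem : ∀ k : ℕ, DeltaHom n k → Prop
  closed : ∀ ⦃k l : ℕ⦄ (g : DeltaHom k l) (f : DeltaHom n k),
    mem k f → mem l (DeltaOp.comp g f)

/-- The semi-simplicial set associated to a subfunctor of `Δ^n`. -/
def SubP.toF {n : ℕ} (S : SubP n) : SSDiagram where
  obj k := { f : DeltaHom n k // S.mem k f }
  map g f := ⟨DeltaOp.comp g f.1, S.closed g f.1 f.2⟩
  map_id _ := Subtype.ext (DeltaOp.id_comp _)
  map_comp _ _ _ := Subtype.ext (DeltaOp.assoc _ _ _).symm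

def SubP.le {n : ℕ} (S S' : SubP n) : Prop := ∀ k f, S.mem k f → S'.mem k f

/-- The inclusion of sub-semi-simplicial sets. -/
def SubP.incl {n : ℕ} {S S' : SubP n} (h : S.le S') : SNat S.toF S'.toF :=
  ⟨fun k f => ⟨f.1, h k f.1 f.2⟩, fun _ _ => rfl⟩

/-- The full subfunctor, i.e. the representable `Δ^n` itself. -/
def fullSub (n : ℕ) : SubP n := ⟨fun _ _ => True, by intros; trivial⟩

/-- The membership predicate of the spine `Sp^n`: all vertices, together with
the consecutive edges `i → i+1`. -/
def spineMem (n : ℕ) : ∀ k : ℕ, DeltaHom n k → Prop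
  | 0, _ => True
  | 1, f => (f.1 1 : ℕ) = (f.1 0 : ℕ) + 1
  | _ + 2, _ => False

/-- The spine `Sp^n` as a subfunctor of `Δ^n`. -/
def spineSub (n : ℕ) : SubP n where
  mem := spineMem n
  closed := by
    intro k l g f hf
    have hlk : l + 1 ≤ k + 1 := strictMono_fin_le g.1 g.2
    rcases l with _ | _ | l
    · trivial
    · rcases k with _ | _ | k
      · exact absurd hlk (by omega)
      · show ((f.1 (g.1 1) : Fin (n+1)) : ℕ) = ((f.1 (g.1 0) : Fin (n+1)) : ℕ) + 1
        have h0 : g.1 0 = 0 := strictMono_fin_id g.1 g.2 0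
        have h1 : g.1 1 = 1 := strictMono_fin_id g.1 g.2 1
        rw [h0, h1]
        exact hf
      · exact hf.elim
    · rcases k with _ | _ | k
      · exact absurd hlk (by omega)
      · exact absurd hlk (by omega)
      · exact hf.elim

/-- The membership predicate of the horn `Λ^n_k`: everything except the top cell
and the `k`-th face (the strictly monotone map skipping the value `k`,
described numerically). -/
def hornMem (n k : ℕ) (m : ℕ) (f : DeltaHom n m) : Prop :=
  if m = n then False
  else if m + 1 = n then
    ¬ (∀ i : Fin (m + 1), (f.1 i : ℕ) = if (i : ℕ) < k then (i : ℕ) else (i : ℕ) + 1)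
  else True

/-- The horn `Λ^n_k` as a subfunctor of `Δ^n`. -/
def hornSub (n k : ℕ) : SubP n where
  mem := hornMem n k
  closed := by
    intro m l g f hf
    have hlm : l + 1 ≤ m + 1 := strictMono_fin_le g.1 g.2
    have hmn : m + 1 ≤ n + 1 := strictMono_fin_le f.1 f.2
    unfold hornMem at hf ⊢
    by_cases hl : l = n
    · rw [if_pos hl]
      have hm : m = n := by omega
      rw [if_pos hm] at hf
      exact hf
    · rw [if_neg hl]
      by_cases hl1 : l + 1 = n
      · rw [if_pos hl1]
        by_cases hm : m = n
        · rw [if_pos hm] at hf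
          exact hf.elim
        · have hm1 : m + 1 = n := by omega
          rw [if_neg hm, if_pos hm1] at hf
          intro hs
          apply hf
          intro i
          have hml : m = l := by omega
          subst hml
          have hgi : g.1 i = i := strictMono_fin_id g.1 g.2 i
          have h2 : ((f.1 (g.1 i) : Fin (n+1)) : ℕ) =
              if (i : ℕ) < k then (i : ℕ) else (i : ℕ) + 1 := hs i
          rw [hgi] at h2
          exact h2
      · rw [if_neg hl1]
        trivial

/-- The spine is contained in `Δ^n`. -/
theorem spine_le_full (n : ℕ) : (spineSub n).le (fullSub n) := fun _ _ _ => trivial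

/-- The horn is contained in `Δ^n`. -/
theorem horn_le_full (n k : ℕ) : (hornSub n k).le (fullSub n) := fun _ _ _ => trivial

/-- The two vertex inclusions of an edge. -/
def V0 : DeltaHom 1 0 :=
  ⟨fun _ => 0, by
    intro a b hab
    exfalso
    have ha := a.isLt
    have hb := b.isLt
    rw [Fin.lt_def] at hab
    omega⟩

def V1 : DeltaHom 1 0 :=
  ⟨fun _ => 1, by
    intro a b hab
    exfalso
    have ha := a.isLt
    have hb := b.isLt
    rw [Fin.lt_def] at hab
    omega⟩

/-- The three faces of a 2-simplex: `Dface j` skips the vertex `j`. -/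
def Dface (j : Fin 3) : DeltaHom 2 1 := ⟨Fin.succAbove j, Fin.strictMono_succAbove j⟩

/-- The fibre of `X₁` over a pair of vertices: edges from `a` to `b`. -/
def EdgeT (X : SSDiagram) (a b : X.obj 0) : Type :=
  { e : X.obj 1 // X.map (x := 1) (y := 0) V0 e = a ∧ X.map (x := 1) (y := 0) V1 e = b }

/-- The fibre of `X₂` over a boundary triangle `(f, g, h)`. -/
def TriT (X : SSDiagram) {a b c : X.obj 0}
    (f : EdgeT X a b) (g : EdgeT X b c) (h : EdgeT X a c) : Type :=
  { t : X.obj 2 // X.map (x := 2) (y := 1) (Dface 2) t = f.1 ∧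
      X.map (x := 2) (y := 1) (Dface 0) t = g.1 ∧ X.map (x := 2) (y := 1) (Dface 1) t = h.1 }

/-- The Segal condition: locality with respect to all spine inclusions. -/
def SegalCondition (T : TLTT) (X : SSDiagram) : Prop :=
  ∀ n : ℕ, TwoLevel.IsHEquiv T
    (fun η : SNat (fullSub n).toF X => natComp η (SubP.incl (spine_le_full n)))
/-- The type of homotopy equivalences (with respect to the fibrant identity
type) between two pretypes. -/
def HEquivT (T : TLTT) (A B : Type) : Type :=
  Σ f : A → B, Σ g : B → A, (∀ a, T.Id A (g (f a)) a) × (∀ b, T.Id B (f (g b)) b)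

/-- The identity equivalence. -/
def idEquivT (T : TLTT) (A : Type) : HEquivT T A A :=
  ⟨_root_.id, _root_.id, fun a => T.idRefl a, fun b => T.idRefl b⟩
theorem fin_pi_essfib (T : TLTT) : ∀ (n : ℕ) (Y : Fin n → Type), (∀ j, T.Fib (Y j)) →
    TwoLevel.EssFib T (∀ j, Y j) := by
  intro n
  induction n with
  | zero =>
    intro Y _
    exact ⟨PUnit, T.fibUnit, ⟨Equiv.punitOfNonemptyOfSubsingleton⟩⟩
  | succ n ih =>
    intro Y hY
    obtain ⟨B, hB, ⟨e⟩⟩ := ih (fun j => Y j.succ) (fun j => hY j.succ)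
    refine ⟨Σ _ : Y 0, B, T.fibSigma (hY 0) (fun _ => hB), ⟨?_⟩⟩
    exact (Fin.consEquiv Y).symm.trans
      ((Equiv.prodCongrRight (fun _ => e)).trans (Equiv.sigmaEquivProd _ _).symm)

/-- if `I` is a finite pretype and `X : I → 𝒰` a family of fibrant
types, then `Π (i : I), X i` is essentially fibrant. -/
theorem finite_pi_essentially_fibrant (T : TLTT) (I : Type) (hI : TwoLevel.IsFinite I)
    (X : I → Type) (hX : ∀ i, T.Fib (X i)) :
    TwoLevel.EssFib T (∀ i, X i) := by
  obtain ⟨n, ⟨e⟩⟩ := hI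
  obtain ⟨B, hB, ⟨e'⟩⟩ := fin_pi_essfib T n (fun j => X (e.symm j))
    (fun j => hX _)
  exact ⟨B, hB, ⟨(Equiv.piCongrLeft' X e).trans e'⟩⟩
end

section
/- If I is a finite pretype and p_i : E_i → B_i is a family of fibrations indexed by I, then the induced map (Π_I E) → (Π_I B) given by postcomposition is a fibration. -/
theorem essFib_of_equiv (T : TLTT) {A B : Type} (e : A ≃ B)
    (h : TwoLevel.EssFib T B) : TwoLevel.EssFib T A := by
  obtain ⟨C, hC, ⟨f⟩⟩ := h
  exact ⟨C, hC, ⟨e.trans f⟩⟩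

theorem essFib_pi_fin (T : TLTT) : ∀ (n : ℕ) (F : Fin n → Type),
    (∀ i, TwoLevel.EssFib T (F i)) → TwoLevel.EssFib T (∀ i, F i) := by
  intro n
  induction n with
  | zero =>
    intro F _
    refine ⟨PUnit, T.fibUnit, ⟨?_⟩⟩
    exact ⟨fun _ => PUnit.unit, fun _ i => i.elim0, fun f => funext fun i => i.elim0,
      fun _ => rfl⟩
  | succ n ih =>
    intro F hF
    obtain ⟨G, hG, ⟨g⟩⟩ := ih (fun i => F i.succ) (fun i => hF i.succ)
    obtain ⟨H, hH, ⟨h⟩⟩ := hF 0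
    refine ⟨Σ _ : H, G, T.fibSigma hH (fun _ => hG), ⟨?_⟩⟩
    exact (Fin.consEquiv F).symm.trans ((h.prodCongr g).trans (Equiv.sigmaEquivProd H G).symm)

/-- for a finite pretype `I` and a family of fibrations
`p i : E i → B i`, the induced map `Π_I E → Π_I B` is a fibration. -/
theorem finite_pi_fibration (T : TLTT) (I : Type) (hI : TwoLevel.IsFinite I)
    (E B : I → Type) (p : ∀ i, E i → B i) (hp : ∀ i, TwoLevel.IsFibration T (p i)) :
    TwoLevel.IsFibration T (fun g : ∀ i, E i => (fun i => p i (g i) : ∀ i, B i)) := by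
  intro b
  obtain ⟨n, ⟨e⟩⟩ := hI
  -- the strict fibre is equivalent to a product of fibres
  have e1 : { g : ∀ i, E i // (fun i => p i (g i)) = b } ≃
      (∀ i, { x : E i // p i x = b i }) :=
    { toFun := fun g i => ⟨g.1 i, congrFun g.2 i⟩
      invFun := fun f => ⟨fun i => (f i).1, funext fun i => (f i).2⟩
      left_inv := fun g => rfl
      right_inv := fun f => rfl }
  have e2 : (∀ i, { x : E i // p i x = b i }) ≃
      (∀ j : Fin n, { x : E (e.symm j) // p (e.symm j) x = b (e.symm j) }) :=
    Equiv.piCongrLeft' _ e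
  refine essFib_of_equiv T (e1.trans e2) ?_
  exact essFib_pi_fin T n _ (fun j => hp (e.symm j) (b (e.symm j)))
end

section
/- Let f : A → B be a cofibration of pretypes and p : X → Y a fibration. Then the induced gap map (B → X) → (B → Y) ×_{(A → Y)} (A → X) is a fibration. -/
/-- the pullback-hom (gap) map of a cofibration against a
fibration is a fibration. -/
theorem cofibration_fibration_gap (T : TLTT) {A B X Y : Type} (f : A → B)
    (hf : TwoLevel.IsCofibration T f) (p : X → Y) (hp : TwoLevel.IsFibration T p) :
    TwoLevel.IsFibration T (fun h : B → X =>
      (⟨(p ∘ h, h ∘ f), rfl⟩ : { q : (B → Y) × (A → X) // p ∘ q.2 = q.1 ∘ f })) := by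
  obtain ⟨Ac, hAc, g, hbij⟩ := hf
  rintro ⟨⟨k, a⟩, hq⟩
  -- hq : p ∘ a = k ∘ f
  obtain ⟨Z, hZ, ⟨e2⟩⟩ := hAc p hp (k ∘ g)
  refine ⟨Z, hZ, ⟨Equiv.trans ?_ e2⟩⟩
  let eB : (A ⊕ Ac) ≃ B := Equiv.ofBijective _ hbij
  have hsf : ∀ x : A, eB.symm (f x) = Sum.inl x := by
    intro x
    apply eB.injective
    rw [Equiv.apply_symm_apply]
    rfl
  have hsg : ∀ y : Ac, eB.symm (g y) = Sum.inr y := by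
    intro y
    apply eB.injective
    rw [Equiv.apply_symm_apply]
    rfl
  refine ⟨fun h => ⟨h.1 ∘ g, ?_⟩, fun m => ⟨(Sum.elim a m.1) ∘ eB.symm, ?_⟩, ?_, ?_⟩
  · obtain ⟨h, hh⟩ := h
    have h1 : p ∘ h = k := congrArg (fun z => z.1.1) hh
    funext y
    exact congrFun h1 (g y)
  · obtain ⟨m, hm⟩ := m
    have hp2 : ∀ y, p (m y) = k (g y) := fun y => congrFun hm y
    refine Subtype.ext ?_
    refine Prod.ext ?_ ?_
    · funext b
      obtain ⟨s, rfl⟩ := eB.surjective b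
      cases s with
      | inl x =>
        show p (Sum.elim a m (eB.symm (eB (Sum.inl x)))) = k (eB (Sum.inl x))
        rw [eB.symm_apply_apply]
        exact congrFun hq x
      | inr y =>
        show p (Sum.elim a m (eB.symm (eB (Sum.inr y)))) = k (eB (Sum.inr y))
        rw [eB.symm_apply_apply]
        exact hp2 y
    · funext x
      show Sum.elim a m (eB.symm (f x)) = a x
      rw [hsf x]
      rfl
  · rintro ⟨h, hh⟩
    have h1 : p ∘ h = k := congrArg (fun z => z.1.1) hh
    have h2 : h ∘ f = a := congrArg (fun z => z.1.2) hh
    refine Subtype.ext ?_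
    funext b
    obtain ⟨s, rfl⟩ := eB.surjective b
    cases s with
    | inl x =>
      show Sum.elim a (h ∘ g) (eB.symm (eB (Sum.inl x))) = h (eB (Sum.inl x))
      rw [eB.symm_apply_apply]
      exact (congrFun h2 x).symm
    | inr y =>
      show Sum.elim a (h ∘ g) (eB.symm (eB (Sum.inr y))) = h (eB (Sum.inr y))
      rw [eB.symm_apply_apply]
      rfl
  · rintro ⟨m, hm⟩
    refine Subtype.ext ?_
    funext y
    show Sum.elim a m (eB.symm (g y)) = m y
    rw [hsg y]
    rfl
end

section
/- Let τ : F → G be a pointwise cofibration of diagrams on an inverse category C, and X a Reedy fibrant diagram. Then the natural transformation of exponential diagrams (− ∘ τ) : [G, X] → [F, X] is a Reedy fibration. Consequently, if Reedy fibrant diagrams on C have fibrant limits, the map Nat(G, X) → Nat(F, X) is a fibration; and taking F = the initial (empty) diagram, if F is pointwise cofibrant then Nat(F, X) is fibrant. -/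
section Aux

open TwoLevel

theorem essfib_of_equiv {T : TLTT} {A B : Type} (e : A ≃ B) (h : EssFib T B) : EssFib T A := by
  obtain ⟨Bf, hf, ⟨e'⟩⟩ := h
  exact ⟨Bf, hf, ⟨e.trans e'⟩⟩

theorem notId_comp {C : SCat} (hC : IsInverse C) {n c d : C.Obj}
    {f : C.Hom n c} (hf : NotId C f) (u : C.Hom c d) : NotId C (C.comp u f) := by
  obtain ⟨φ, hφ⟩ := hC
  rcases hφ f with h1 | ⟨e, he⟩
  · rcases hφ u with h2 | ⟨e, he⟩
    · rintro ⟨e3, -⟩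
      subst e3
      omega
    · subst e
      have he' : u = C.id c := eq_of_heq he
      subst he'
      rw [C.id_comp]
      exact hf
  · exact absurd ⟨e, he⟩ hf

section Beta

variable {C : SCat} {G X : SFunctor C} {n : C.Obj}

/-- The "diagonal coordinates" of a matching-object element of `[G,X]` at `n`. -/
def betaOf (cG : Matching (expF G X) n) (w : RedCoslice C n) (b : G.obj w.1) : X.obj w.1 :=
  (cG.1 w).app w.1 (b, C.id w.1)

theorem beta_master (cG : Matching (expF G X) n) (w : RedCoslice C n) {c : C.Obj}
    (v : C.Hom w.1 c) (a : G.obj c) (hk : NotId C (C.comp v w.2.1)) :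
    (cG.1 w).app c (a, v) = betaOf cG ⟨c, ⟨C.comp v w.2.1, hk⟩⟩ a := by
  have hc := cG.2 (show (RedCosliceCat C n).Hom w ⟨c, ⟨C.comp v w.2.1, hk⟩⟩ from ⟨v, rfl⟩)
  unfold betaOf
  rw [← hc]
  show (cG.1 w).app c (a, v) = (cG.1 w).app c (a, C.comp (C.id c) v)
  rw [C.id_comp]

theorem betaOf_congr {C : SCat} {G X : SFunctor C} {n : C.Obj}
    (cG : Matching (expF G X) n) {c : C.Obj} {p q : {f : C.Hom n c // NotId C f}}
    (hpq : p = q) (b : G.obj c) :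
    betaOf cG ⟨c, p⟩ b = betaOf cG ⟨c, q⟩ b := by
  cases hpq
  rfl

theorem beta_nat (cG : Matching (expF G X) n) {w w' : RedCoslice C n}
    (h : C.Hom w.1 w'.1) (hcomm : C.comp h w.2.1 = w'.2.1) (b : G.obj w.1) :
    X.map h (betaOf cG w b) = betaOf cG w' (G.map h b) := by
  obtain ⟨c', f', hf'⟩ := w'
  have hk : NotId C (C.comp h w.2.1) := by rw [hcomm]; exact hf'
  have h1 := (cG.1 w).nat h (b, C.id w.1)
  unfold betaOf
  rw [h1]
  show (cG.1 w).app c' (G.map h b, C.comp h (C.id w.1)) = _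
  rw [C.comp_id, beta_master cG w h (G.map h b) hk]
  exact betaOf_congr cG (Subtype.ext hcomm) (G.map h b)

/-- The pointwise matching element determined by a matching-object element of `[G,X]`. -/
def MOf (cG : Matching (expF G X) n) (a : G.obj n) : Matching X n :=
  ⟨fun w => betaOf cG w (G.map w.2.1 a), by
    intro w w' h
    show X.map h.1 (betaOf cG w (G.map w.2.1 a)) = betaOf cG w' (G.map w'.2.1 a)
    rw [beta_nat cG h.1 h.2, G.map_comp, h.2]⟩

theorem xi_beta {ξ : SNat (yonProd G n) X} {cG : Matching (expF G X) n}
    (hξ : canMatch (expF G X) n ξ = cG) (w : RedCoslice C n) (b : G.obj w.1) :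
    betaOf cG w b = ξ.app w.1 (b, w.2.1) := by
  subst hξ
  show ξ.app w.1 (b, C.comp (C.id w.1) w.2.1) = _
  rw [C.id_comp]

/-- The total component family determined by an identity-component `u` and
matching data `cG`. -/
noncomputable def alphaFun (cG : Matching (expF G X) n) (u : G.obj n → X.obj n)
    (c : C.Obj) (f : C.Hom n c) : G.obj c → X.obj c :=
  @dite _ (NotId C f) (Classical.dec _) (fun h => betaOf cG ⟨c, ⟨f, h⟩⟩)
    (fun h => fun a =>
      cast (congrArg X.obj (not_not.mp h).choose)
        (u (cast (congrArg G.obj (not_not.mp h).choose).symm a)))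

theorem alpha_notId (cG : Matching (expF G X) n) (u : G.obj n → X.obj n)
    {c : C.Obj} {f : C.Hom n c} (h : NotId C f) :
    alphaFun cG u c f = betaOf cG ⟨c, ⟨f, h⟩⟩ := by
  unfold alphaFun
  rw [dif_pos h]

theorem alpha_id (cG : Matching (expF G X) n) (u : G.obj n → X.obj n) :
    alphaFun cG u n (C.id n) = u := by
  have h : ¬ NotId C (C.id n) := fun hh => hh ⟨rfl, HEq.rfl⟩
  funext a
  show alphaFun cG u n (C.id n) a = u a
  unfold alphaFun
  rw [dif_neg h]
  rfl

noncomputable def buildXi (hC : IsInverse C) (cG : Matching (expF G X) n)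
    (u : G.obj n → X.obj n) (hu : ∀ a, canMatch X n (u a) = MOf cG a) :
    SNat (yonProd G n) X where
  app c z := alphaFun cG u c z.2 z.1
  nat {c c'} h z := by
    obtain ⟨a, f⟩ := z
    show X.map h (alphaFun cG u c f a) = alphaFun cG u c' (C.comp h f) (G.map h a)
    rcases Classical.em (NotId C f) with hf | hf
    · rw [alpha_notId cG u hf, alpha_notId cG u (notId_comp hC hf h)]
      exact beta_nat cG (w := ⟨c, ⟨f, hf⟩⟩) (w' := ⟨c', ⟨C.comp h f, notId_comp hC hf h⟩⟩)
        h rfl a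
    · obtain ⟨e, he⟩ := not_not.mp hf
      subst e
      have hfe : f = C.id n := eq_of_heq he
      subst hfe
      rw [C.comp_id, alpha_id]
      rcases Classical.em (NotId C h) with hh | hh
      · rw [alpha_notId cG u hh]
        exact congrFun (congrArg Subtype.val (hu a)) ⟨c', ⟨h, hh⟩⟩
      · obtain ⟨e, he2⟩ := not_not.mp hh
        subst e
        have hh' : h = C.id n := eq_of_heq he2
        subst hh'
        rw [X.map_id, G.map_id, alpha_id]

theorem buildXi_match (hC : IsInverse C) (cG : Matching (expF G X) n)
    (u : G.obj n → X.obj n) (hu : ∀ a, canMatch X n (u a) = MOf cG a) :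
    canMatch (expF G X) n (buildXi hC cG u hu) = cG := by
  apply Subtype.ext
  funext w
  show (expF G X).map w.2.1 (buildXi hC cG u hu) = cG.1 w
  apply SNat.ext'
  funext d z
  obtain ⟨a, v⟩ := z
  show alphaFun cG u d (C.comp v w.2.1) a = (cG.1 w).app d (a, v)
  rw [alpha_notId cG u (notId_comp hC w.2.2 v), beta_master cG w v a (notId_comp hC w.2.2 v)]

variable {F : SFunctor C}

theorem beta_tau {τ : SNat F G} {cG : Matching (expF G X) n}
    {η : SNat (yonProd F n) X}
    (hpt : matchNat (expMap τ X) n cG = canMatch (expF F X) n η)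
    (w : RedCoslice C n) (b : F.obj w.1) :
    betaOf cG w (τ.app w.1 b) = η.app w.1 (b, w.2.1) := by
  have h1 := congrFun (congrArg Subtype.val hpt) w
  have h2 : (cG.1 w).app w.1 (τ.app w.1 b, C.id w.1)
      = η.app w.1 (b, C.comp (C.id w.1) w.2.1) :=
    congrFun (congrFun (congrArg SNat.app h1) w.1) (b, C.id w.1)
  show (cG.1 w).app w.1 (τ.app w.1 b, C.id w.1) = η.app w.1 (b, w.2.1)
  rw [h2, C.id_comp]

theorem natcomp_of_pointwise (hC : IsInverse C) {τ : SNat F G}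
    {ξ : SNat (yonProd G n) X} {cG : Matching (expF G X) n} {η : SNat (yonProd F n) X}
    (hξ : canMatch (expF G X) n ξ = cG)
    (hpt : matchNat (expMap τ X) n cG = canMatch (expF F X) n η)
    (h : ∀ a, ξ.app n (τ.app n a, C.id n) = η.app n (a, C.id n)) :
    natComp ξ (prodWhisker τ n) = η := by
  apply SNat.ext'
  funext c z
  obtain ⟨a, f⟩ := z
  show ξ.app c (τ.app c a, f) = η.app c (a, f)
  rcases Classical.em (NotId C f) with hf | hf
  · rw [← xi_beta hξ ⟨c, ⟨f, hf⟩⟩ (τ.app c a), beta_tau hpt ⟨c, ⟨f, hf⟩⟩ a]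
  · obtain ⟨e, he⟩ := not_not.mp hf
    subst e
    have hfe : f = C.id n := eq_of_heq he
    subst hfe
    exact h a

end Beta

theorem essfib_ucond (T : TLTT) {An Gn Xn Mn : Type} {τn : An → Gn}
    (hcof : IsCofibration T τn) {P : Xn → Mn} (hP : IsFibration T P)
    (M : Gn → Mn) (v : An → Xn) (hcompat : ∀ a, P (v a) = M (τn a)) :
    EssFib T {u : Gn → Xn // (∀ x, P (u x) = M x) ∧ ∀ a, u (τn a) = v a} := by
  obtain ⟨Ac, hAc, g, hbij⟩ := hcof
  have hfib := hAc P hP (fun b => M (g b))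
  refine essfib_of_equiv ?_ hfib
  let e : An ⊕ Ac ≃ Gn := Equiv.ofBijective _ hbij
  have hel : ∀ a, e (Sum.inl a) = τn a := fun a => rfl
  have her : ∀ b, e (Sum.inr b) = g b := fun b => rfl
  refine ⟨fun u => ⟨fun b => u.1 (g b), funext fun b => u.2.1 (g b)⟩,
    fun q => ⟨fun x => Sum.elim v q.1 (e.symm x), ?_, ?_⟩, ?_, ?_⟩
  · intro x
    have hx : e (e.symm x) = x := e.apply_symm_apply x
    show P (Sum.elim v q.1 (e.symm x)) = M x
    rcases hs : e.symm x with a | b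
    · have hx2 : e (Sum.inl a) = x := by rw [← hs]; exact hx
      show P (v a) = M x
      rw [hcompat a, ← hel a, hx2]
    · have hx2 : e (Sum.inr b) = x := by rw [← hs]; exact hx
      show P (q.1 b) = M x
      have hq : P (q.1 b) = M (g b) := congrFun q.2 b
      rw [hq, ← her b, hx2]
  · intro a
    have h1 : e.symm (τn a) = Sum.inl a := by rw [← hel a, e.symm_apply_apply]
    show Sum.elim v q.1 (e.symm (τn a)) = v a
    rw [h1]
    rfl
  · intro u
    apply Subtype.ext
    funext x
    obtain ⟨s, rfl⟩ : ∃ s, e s = x := ⟨e.symm x, e.apply_symm_apply x⟩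
    show Sum.elim v (fun b => u.1 (g b)) (e.symm (e s)) = u.1 (e s)
    rw [e.symm_apply_apply]
    cases s with
    | inl a =>
      show v a = u.1 (e (Sum.inl a))
      rw [hel a]
      exact (u.2.2 a).symm
    | inr b => rfl
  · intro q
    apply Subtype.ext
    funext b
    show Sum.elim v q.1 (e.symm (g b)) = q.1 b
    rw [← her b, e.symm_apply_apply]
    rfl

theorem main_fiber (T : TLTT) {C : SCat} (hC : IsInverse C) {F G X : SFunctor C}
    (τ : SNat F G) (hX : ReedyFibrant T X) (n : C.Obj)
    (hτn : IsCofibration T (τ.app n))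
    (cG : Matching (expF G X) n) (η : SNat (yonProd F n) X)
    (hpt : matchNat (expMap τ X) n cG = canMatch (expF F X) n η) :
    EssFib T {ξ : SNat (yonProd G n) X //
      canMatch (expF G X) n ξ = cG ∧ natComp ξ (prodWhisker τ n) = η} := by
  have hMcompat : ∀ a, canMatch X n (η.app n (a, C.id n)) = MOf cG (τ.app n a) := by
    intro a
    apply Subtype.ext
    funext w
    show X.map w.2.1 (η.app n (a, C.id n)) = betaOf cG w (G.map w.2.1 (τ.app n a))
    have h1 : X.map w.2.1 (η.app n (a, C.id n))
        = η.app w.1 (F.map w.2.1 a, C.comp w.2.1 (C.id n)) := η.nat w.2.1 (a, C.id n)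
    rw [h1, C.comp_id, ← beta_tau hpt w (F.map w.2.1 a), ← τ.nat w.2.1 a]
  have hS := essfib_ucond T hτn (hX n) (MOf cG) (fun a => η.app n (a, C.id n)) hMcompat
  have c1 : ∀ (ξ : {ξ : SNat (yonProd G n) X //
      canMatch (expF G X) n ξ = cG ∧ natComp ξ (prodWhisker τ n) = η}) (a : G.obj n),
      canMatch X n (ξ.1.app n (a, C.id n)) = MOf cG a := by
    intro ξ a
    apply Subtype.ext
    funext w
    show X.map w.2.1 (ξ.1.app n (a, C.id n)) = betaOf cG w (G.map w.2.1 a)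
    have h1 : X.map w.2.1 (ξ.1.app n (a, C.id n))
        = ξ.1.app w.1 (G.map w.2.1 a, C.comp w.2.1 (C.id n)) := ξ.1.nat w.2.1 (a, C.id n)
    rw [h1, C.comp_id, xi_beta ξ.2.1 w (G.map w.2.1 a)]
  have c2 : ∀ (ξ : {ξ : SNat (yonProd G n) X //
      canMatch (expF G X) n ξ = cG ∧ natComp ξ (prodWhisker τ n) = η}) (a : F.obj n),
      ξ.1.app n (τ.app n a, C.id n) = η.app n (a, C.id n) := fun ξ a =>
    congrFun (congrFun (congrArg SNat.app ξ.2.2) n) (a, C.id n)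
  refine essfib_of_equiv (Equiv.ofBijective
    (fun ξ => ⟨fun a => ξ.1.app n (a, C.id n), c1 ξ, c2 ξ⟩) ⟨?_, ?_⟩) hS
  · intro ξ ξ' hΦ
    have hu : ∀ a, ξ.1.app n (a, C.id n) = ξ'.1.app n (a, C.id n) :=
      fun a => congrFun (congrArg Subtype.val hΦ) a
    apply Subtype.ext
    apply SNat.ext'
    funext c z
    obtain ⟨a, f⟩ := z
    show ξ.1.app c (a, f) = ξ'.1.app c (a, f)
    rcases Classical.em (NotId C f) with hf | hf
    · rw [← xi_beta ξ.2.1 ⟨c, ⟨f, hf⟩⟩ a, ← xi_beta ξ'.2.1 ⟨c, ⟨f, hf⟩⟩ a]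
    · obtain ⟨e, he⟩ := not_not.mp hf
      subst e
      have hfe : f = C.id n := eq_of_heq he
      subst hfe
      exact hu a
  · rintro ⟨u, hu1, hu2⟩
    refine ⟨⟨buildXi hC cG u hu1, buildXi_match hC cG u hu1, ?_⟩, ?_⟩
    · apply natcomp_of_pointwise hC (buildXi_match hC cG u hu1) hpt
      intro a
      show alphaFun cG u n (C.id n) (τ.app n a) = η.app n (a, C.id n)
      rw [alpha_id]
      exact hu2 a
    · apply Subtype.ext
      funext a
      show alphaFun cG u n (C.id n) a = u a
      rw [alpha_id]

theorem nat_fiber (T : TLTT) {C : SCat} (hC : IsInverse C) {F G X : SFunctor C}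
    (τ : SNat F G) (hτ : ∀ m, IsCofibration T (τ.app m)) (hX : ReedyFibrant T X)
    (hlim : ∀ W : SFunctor C, ReedyFibrant T W → EssFib T (SLimit C W))
    (η₀ : SNat F X) :
    EssFib T {ρ : SNat G X // natComp ρ τ = η₀} := by
  let etaC : ∀ d, SNat (yonProd F d) X := fun d =>
    ⟨fun c z => η₀.app c z.1, fun {c c'} h z => η₀.nat h z.1⟩
  let uu : SNat (constF C PUnit) (expF F X) :=
    ⟨fun d _ => etaC d, fun {d d'} h a => SNat.ext' rfl⟩
  let W : SFunctor C := pbFunctor uu (expMap τ X)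
  have hW : ReedyFibrant T W := by
    intro m cW
    let cG : Matching (expF G X) m := ⟨fun w => (cW.1 w).1.2, by
      intro w w' h
      exact congrArg (fun y => y.1.2) (cW.2 h)⟩
    have hpt : matchNat (expMap τ X) m cG = canMatch (expF F X) m (etaC m) := by
      apply Subtype.ext
      funext w
      show (expMap τ X).app w.1 (cG.1 w) = (expF F X).map w.2.1 (etaC m)
      have h2 : uu.app w.1 (cW.1 w).1.1 = (expMap τ X).app w.1 (cW.1 w).1.2 := (cW.1 w).2
      exact h2.symm.trans (SNat.ext' rfl)
    have pfA : ∀ (x : {y : W.obj m // canMatch W m y = cW}),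
        canMatch (expF G X) m x.1.1.2 = cG := by
      intro x
      apply Subtype.ext
      funext w
      exact congrArg (fun y => y.1.2) (congrFun (congrArg Subtype.val x.2) w)
    have pfB : ∀ (ξ : {ξ : SNat (yonProd G m) X //
        canMatch (expF G X) m ξ = cG ∧ natComp ξ (prodWhisker τ m) = etaC m}),
        canMatch W m (⟨(PUnit.unit, ξ.1), ξ.2.2.symm⟩ : W.obj m) = cW := by
      intro ξ
      apply Subtype.ext
      funext w
      apply Subtype.ext
      exact Prod.ext rfl (congrFun (congrArg Subtype.val ξ.2.1) w)
    refine essfib_of_equiv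
      ⟨fun x => ⟨x.1.1.2, pfA x, x.1.2.symm⟩,
       fun ξ => ⟨⟨(PUnit.unit, ξ.1), ξ.2.2.symm⟩, pfB ξ⟩, ?_, ?_⟩
      (main_fiber T hC τ hX m (hτ m) cG (etaC m) hpt)
    · intro x
      apply Subtype.ext
      apply Subtype.ext
      rfl
    · intro ξ
      apply Subtype.ext
      rfl
  let xiOf : {ρ : SNat G X // natComp ρ τ = η₀} → ∀ d, SNat (yonProd G d) X :=
    fun ρ d => ⟨fun c z => ρ.1.app c z.1, fun {c c'} h z => ρ.1.nat h z.1⟩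
  have pf1 : ∀ ρ d, uu.app d PUnit.unit = (expMap τ X).app d (xiOf ρ d) := by
    intro ρ d
    apply SNat.ext'
    funext c z
    exact (congrFun (congrFun (congrArg SNat.app ρ.2) c) z.1).symm
  have pf2 : ∀ ρ ⦃d d'⦄ (f : C.Hom d d'),
      W.map f (⟨(PUnit.unit, xiOf ρ d), pf1 ρ d⟩ : W.obj d)
        = ⟨(PUnit.unit, xiOf ρ d'), pf1 ρ d'⟩ := by
    intro ρ d d' f
    apply Subtype.ext
    exact Prod.ext rfl (SNat.ext' rfl)
  let toF : {ρ : SNat G X // natComp ρ τ = η₀} → SLimit C W :=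
    fun ρ => ⟨fun d => ⟨(PUnit.unit, xiOf ρ d), pf1 ρ d⟩, pf2 ρ⟩
  have pf3 : ∀ (cc : SLimit C W) ⦃d d'⦄ (h : C.Hom d d') (a : G.obj d),
      X.map h ((cc.1 d).1.2.app d (a, C.id d))
        = (cc.1 d').1.2.app d' (G.map h a, C.id d') := by
    intro cc d d' h a
    have h1 : X.map h ((cc.1 d).1.2.app d (a, C.id d))
        = (cc.1 d).1.2.app d' (G.map h a, C.comp h (C.id d)) :=
      (cc.1 d).1.2.nat h (a, C.id d)
    have h2 := congrArg (fun y => y.1.2) (cc.2 h)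
    have h3 : (cc.1 d).1.2.app d' (G.map h a, C.comp (C.id d') h)
        = (cc.1 d').1.2.app d' (G.map h a, C.id d') :=
      congrFun (congrFun (congrArg SNat.app h2) d') (G.map h a, C.id d')
    rw [C.id_comp] at h3
    rw [h1, C.comp_id]
    exact h3
  let rho : SLimit C W → SNat G X :=
    fun cc => ⟨fun d a => (cc.1 d).1.2.app d (a, C.id d), fun {d d'} h a => pf3 cc h a⟩
  have pf4 : ∀ cc, natComp (rho cc) τ = η₀ := by
    intro cc
    apply SNat.ext'
    funext d a
    have h4 : (etaC d).app d (a, C.id d)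
        = (natComp (cc.1 d).1.2 (prodWhisker τ d)).app d (a, C.id d) :=
      congrFun (congrFun (congrArg SNat.app (cc.1 d).2) d) (a, C.id d)
    exact h4.symm
  refine essfib_of_equiv ⟨toF, fun cc => ⟨rho cc, pf4 cc⟩, ?_, ?_⟩ (hlim W hW)
  · intro ρ
    apply Subtype.ext
    apply SNat.ext'
    rfl
  · intro cc
    apply Subtype.ext
    funext d
    apply Subtype.ext
    refine Prod.ext rfl ?_
    apply SNat.ext'
    funext c z
    show (cc.1 c).1.2.app c (z.1, C.id c) = (cc.1 d).1.2.app c z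
    have h5 : (cc.1 d).1.2.app c (z.1, C.comp (C.id c) z.2)
        = (cc.1 c).1.2.app c (z.1, C.id c) :=
      congrFun (congrFun (congrArg SNat.app
        (congrArg (fun y => y.1.2) (cc.2 z.2))) c) (z.1, C.id c)
    rw [C.id_comp] at h5
    exact h5.symm

def emptyNat {C : SCat} (G : SFunctor C) : SNat (constF C Empty) G :=
  ⟨fun _ a => a.elim, fun _ a => a.elim⟩

theorem empty_cofibration (T : TLTT) {C : SCat} (G : SFunctor C) (m : C.Obj)
    (h : Cofibrant T (G.obj m)) : IsCofibration T ((emptyNat G).app m) := by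
  refine ⟨G.obj m, h, _root_.id, ?_, fun y => ⟨Sum.inr y, rfl⟩⟩
  rintro (a | x) (b | y) hxy
  · exact a.elim
  · exact a.elim
  · exact b.elim
  · exact congrArg Sum.inr hxy

end Aux

/-- for a pointwise cofibration `τ : F → G` of diagrams over an
inverse category and a Reedy fibrant `X`, the map `[G,X] → [F,X]` is a Reedy
fibration; consequently `Nat(G,X) → Nat(F,X)` is a fibration when Reedy fibrant
diagrams have fibrant limits, and `Nat(F',X)` is fibrant for pointwise
cofibrant `F'`. -/
theorem exponential_reedy_fibration (T : TLTT) (C : SCat) (hC : IsInverse C)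
    (F G X : SFunctor C) (τ : SNat F G) (hτ : ∀ n, TwoLevel.IsCofibration T (τ.app n))
    (hX : ReedyFibrant T X) :
    IsReedyFibration T (expMap τ X) ∧
    ((∀ W : SFunctor C, ReedyFibrant T W → TwoLevel.EssFib T (SLimit C W)) →
      TwoLevel.IsFibration T (fun η : SNat G X => natComp η τ)) ∧
    (∀ F' : SFunctor C, (∀ n, TwoLevel.Cofibrant T (F'.obj n)) →
      ReedyFibrant T (expF F' X) ∧
      ((∀ W : SFunctor C, ReedyFibrant T W → TwoLevel.EssFib T (SLimit C W)) →
        TwoLevel.EssFib T (SNat F' X))) := by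
  refine ⟨?_, ?_, ?_⟩
  · intro m pt
    obtain ⟨⟨cG, η⟩, hpt⟩ := pt
    refine essfib_of_equiv (Equiv.subtypeEquivRight ?_)
      (main_fiber T hC τ hX m (hτ m) cG η hpt)
    intro ξ
    constructor
    · intro h
      have h1 := congrArg Subtype.val h
      exact ⟨congrArg Prod.fst h1, congrArg Prod.snd h1⟩
    · rintro ⟨h1, h2⟩
      exact Subtype.ext (Prod.ext h1 h2)
  · intro hlim η₀
    exact nat_fiber T hC τ hτ hX hlim η₀
  · intro F' hF'
    constructor
    · intro m cG
      let ηE : SNat (yonProd (constF C Empty) m) X :=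
        ⟨fun c z => z.1.elim, fun {c c'} h z => z.1.elim⟩
      have hpt : matchNat (expMap (emptyNat F') X) m cG
          = canMatch (expF (constF C Empty) X) m ηE := by
        apply Subtype.ext
        funext w
        apply SNat.ext'
        funext c z
        exact z.1.elim
      refine essfib_of_equiv (Equiv.subtypeEquivRight ?_)
        (main_fiber T hC (emptyNat F') hX m (empty_cofibration T F' m (hF' m)) cG ηE hpt)
      have hB : ∀ ξ : SNat (yonProd F' m) X,
          natComp ξ (prodWhisker (emptyNat F') m) = ηE :=
        fun ξ => SNat.ext' (funext fun c => funext fun z => z.1.elim)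
      intro ξ
      exact (and_iff_left (hB ξ)).symm
    · intro hlim
      let η₀E : SNat (constF C Empty) X := ⟨fun _ a => a.elim, fun {i j} f a => a.elim⟩
      have h := nat_fiber T hC (emptyNat F') (fun m => empty_cofibration T F' m (hF' m))
        hX hlim η₀E
      have hall : ∀ ρ : SNat F' X, natComp ρ (emptyNat F') = η₀E :=
        fun ρ => SNat.ext' (funext fun i => funext fun a => a.elim)
      exact essfib_of_equiv (Equiv.subtypeUnivEquiv hall).symm h
end
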